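/- For m ≥ 1 and R > m, one has |∫_m^R √(1 - (m² - 1/4)/x²) dx - ∫_m^R √(1 - m²/x²) dx| ≤ π/(4m). -/

import Mathlib

theorem stmt_14 (m R : ℝ) (hm : 1 ≤ m) (hR : m < R) :
    |(∫ x in m..R, Real.sqrt (1 - (m ^ 2 - 1 / 4) / x ^ 2)) -
        ∫ x in m..R, Real.sqrt (1 - m ^ 2 / x ^ 2)| ≤ Real.pi / (4 * m) := by
  set c := Real.sqrt (m ^ 2 - 1 / 4) with hc
  have hm0 : (0:ℝ) < m := lt_of_lt_of_le one_pos hm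
  have hms : (0:ℝ) ≤ m ^ 2 - 1 / 4 := by nlinarith
  have hc2 : c ^ 2 = m ^ 2 - 1 / 4 := Real.sq_sqrt hms
  have hc0 : 0 < c := Real.sqrt_pos.mpr (by nlinarith)
  have hcm : c < m := by nlinarith [Real.sqrt_nonneg (m ^ 2 - 1/4)]
  have hm2c : m ≤ 2 * c := by nlinarith
  have hIcc : Set.uIcc m R = Set.Icc m R := Set.uIcc_of_le hR.le
  have hxfacts : ∀ x ∈ Set.Icc m R, 0 < x ∧ (0:ℝ) < x ^ 2 - c ^ 2 := by
    intro x hx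
    have hx1 : m ≤ x := hx.1
    exact ⟨by linarith, by nlinarith⟩
  set g : ℝ → ℝ := fun x => 1 / (4 * (x * Real.sqrt (x ^ 2 - c ^ 2))) with hg
  set F : ℝ → ℝ := fun x => (1 / (4 * c)) * Real.arctan (Real.sqrt (x ^ 2 - c ^ 2) / c) with hF
  have hderiv : ∀ x ∈ Set.uIcc m R, HasDerivAt F (g x) x := by
    intro x hx
    rw [hIcc] at hx
    obtain ⟨hx0, hxc⟩ := hxfacts x hx
    set s := Real.sqrt (x ^ 2 - c ^ 2) with hs
    have hs0 : 0 < s := Real.sqrt_pos.mpr hxc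
    have hs2 : s ^ 2 = x ^ 2 - c ^ 2 := Real.sq_sqrt hxc.le
    have h1 : HasDerivAt (fun y : ℝ => y ^ 2 - c ^ 2) (2 * x) x := by
      simpa using (hasDerivAt_pow 2 x).sub_const (c ^ 2)
    have h2 : HasDerivAt (fun y : ℝ => Real.sqrt (y ^ 2 - c ^ 2)) (x / s) x := by
      have := (Real.hasDerivAt_sqrt (ne_of_gt hxc)).comp x h1
      refine this.congr_deriv ?_
      field_simp
      ring
    have h3 : HasDerivAt (fun y : ℝ => Real.arctan (Real.sqrt (y ^ 2 - c ^ 2) / c))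
        ((1 / (1 + (s / c) ^ 2)) * ((x / s) / c)) x :=
      (h2.div_const c).arctan
    have h4 := h3.const_mul (1 / (4 * c))
    refine h4.congr_deriv ?_
    have h15 : 1 + (s / c) ^ 2 = x ^ 2 / c ^ 2 := by
      field_simp
      linarith [hs2]
    simp only [hg, h15]
    field_simp
    ring
  have hgcont : ContinuousOn g (Set.uIcc m R) := by
    rw [hIcc]
    apply ContinuousOn.div continuousOn_const
    · exact continuousOn_const.mul (continuousOn_id.mul
        ((continuousOn_pow 2).sub continuousOn_const).sqrt)
    · intro x hx
      obtain ⟨hx0, hxc⟩ := hxfacts x hx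
      have := Real.sqrt_pos.mpr hxc
      positivity
  have hgint : IntervalIntegrable g MeasureTheory.volume m R := hgcont.intervalIntegrable
  have hgval : (∫ x in m..R, g x) = F R - F m :=
    intervalIntegral.integral_eq_sub_of_hasDerivAt hderiv hgint
  have hcont1 : ContinuousOn (fun x => Real.sqrt (1 - (m ^ 2 - 1 / 4) / x ^ 2)) (Set.uIcc m R) := by
    rw [hIcc]
    apply ContinuousOn.sqrt
    apply ContinuousOn.sub continuousOn_const
    apply ContinuousOn.div continuousOn_const (continuousOn_pow 2)
    intro x hx
    have := (hxfacts x hx).1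
    positivity
  have hcont2 : ContinuousOn (fun x => Real.sqrt (1 - m ^ 2 / x ^ 2)) (Set.uIcc m R) := by
    rw [hIcc]
    apply ContinuousOn.sqrt
    apply ContinuousOn.sub continuousOn_const
    apply ContinuousOn.div continuousOn_const (continuousOn_pow 2)
    intro x hx
    have := (hxfacts x hx).1
    positivity
  have hint1 : IntervalIntegrable (fun x => Real.sqrt (1 - (m ^ 2 - 1 / 4) / x ^ 2))
      MeasureTheory.volume m R := hcont1.intervalIntegrable
  have hint2 : IntervalIntegrable (fun x => Real.sqrt (1 - m ^ 2 / x ^ 2))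
      MeasureTheory.volume m R := hcont2.intervalIntegrable
  -- pointwise: sqrt b ≤ sqrt a and sqrt a - sqrt b ≤ g x
  have hptle : ∀ x ∈ Set.Icc m R,
      Real.sqrt (1 - m ^ 2 / x ^ 2) ≤ Real.sqrt (1 - (m ^ 2 - 1 / 4) / x ^ 2) := by
    intro x hx
    obtain ⟨hx0, hxc⟩ := hxfacts x hx
    apply Real.sqrt_le_sqrt
    have hx2 : (0:ℝ) < x ^ 2 := by positivity
    have : (m ^ 2 - 1 / 4) / x ^ 2 ≤ m ^ 2 / x ^ 2 := by
      apply div_le_div_of_nonneg_right ?_ hx2.le <;> try linarith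
    linarith
  have hptg : ∀ x ∈ Set.Icc m R,
      Real.sqrt (1 - (m ^ 2 - 1 / 4) / x ^ 2) - Real.sqrt (1 - m ^ 2 / x ^ 2) ≤ g x := by
    intro x hx
    obtain ⟨hx0, hxc⟩ := hxfacts x hx
    have hmx : m ≤ x := hx.1
    set s := Real.sqrt (x ^ 2 - c ^ 2) with hs
    have hs0 : 0 < s := Real.sqrt_pos.mpr hxc
    have hs2 : s ^ 2 = x ^ 2 - c ^ 2 := Real.sq_sqrt hxc.le
    have hx2 : (0:ℝ) < x ^ 2 := by positivity
    have hb0 : (0:ℝ) ≤ 1 - m ^ 2 / x ^ 2 := by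
      rw [sub_nonneg, div_le_one hx2]
      nlinarith
    have ha : 1 - (m ^ 2 - 1 / 4) / x ^ 2 = (x ^ 2 - c ^ 2) / x ^ 2 := by
      rw [hc2]; field_simp
    have hsa : Real.sqrt (1 - (m ^ 2 - 1 / 4) / x ^ 2) = s / x := by
      rw [ha, Real.sqrt_div hxc.le, Real.sqrt_sq hx0.le]
    set b := Real.sqrt (1 - m ^ 2 / x ^ 2) with hbdef
    have hbsq : b ^ 2 = 1 - m ^ 2 / x ^ 2 := Real.sq_sqrt hb0
    have hb_le : b ≤ s / x := by rw [← hsa]; exact hptle x hx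
    have hbnn : 0 ≤ b := Real.sqrt_nonneg _
    -- key: (s/x - b) * (s/x) ≤ a - b² = 1/(4x²)
    have hkey : (s / x - b) * (s / x) ≤ 1 / (4 * x ^ 2) := by
      have h1 : b * b ≤ b * (s / x) := mul_le_mul_of_nonneg_left hb_le hbnn
      have h2 : (s / x) ^ 2 = (x ^ 2 - c ^ 2) / x ^ 2 := by
        rw [div_pow, hs2]
      have h3 : (x ^ 2 - c ^ 2) / x ^ 2 - b ^ 2 = 1 / (4 * x ^ 2) := by
        rw [hbsq, hc2]; field_simp; ring
      calc (s / x - b) * (s / x) = (s / x) ^ 2 - b * (s / x) := by ring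
        _ ≤ (s / x) ^ 2 - b * b := by linarith
        _ = (x ^ 2 - c ^ 2) / x ^ 2 - b ^ 2 := by rw [h2]; ring
        _ = 1 / (4 * x ^ 2) := h3
    have hsx0 : 0 < s / x := by positivity
    have := (le_div_iff₀ hsx0).mpr hkey
    rw [hsa]
    calc s / x - b ≤ (1 / (4 * x ^ 2)) / (s / x) := this
      _ = g x := by simp only [hg]; field_simp; ring
  have hdiff : (∫ x in m..R, Real.sqrt (1 - (m ^ 2 - 1 / 4) / x ^ 2)) -
      (∫ x in m..R, Real.sqrt (1 - m ^ 2 / x ^ 2)) =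
      ∫ x in m..R, (Real.sqrt (1 - (m ^ 2 - 1 / 4) / x ^ 2) - Real.sqrt (1 - m ^ 2 / x ^ 2)) :=
    (intervalIntegral.integral_sub hint1 hint2).symm
  have hnn : 0 ≤ (∫ x in m..R, (Real.sqrt (1 - (m ^ 2 - 1 / 4) / x ^ 2) - Real.sqrt (1 - m ^ 2 / x ^ 2))) := by
    apply intervalIntegral.integral_nonneg hR.le
    intro x hx
    exact sub_nonneg.mpr (hptle x hx)
  rw [hdiff, abs_of_nonneg hnn]
  have hmono : (∫ x in m..R, (Real.sqrt (1 - (m ^ 2 - 1 / 4) / x ^ 2) - Real.sqrt (1 - m ^ 2 / x ^ 2)))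
      ≤ ∫ x in m..R, g x := by
    apply intervalIntegral.integral_mono_on hR.le (hint1.sub hint2) hgint
    intro x hx
    exact hptg x hx
  refine hmono.trans ?_
  rw [hgval]
  -- F R - F m ≤ π/(8c) ≤ π/(4m)
  have hFR : F R ≤ (1 / (4 * c)) * (Real.pi / 2) := by
    apply mul_le_mul_of_nonneg_left (Real.arctan_lt_pi_div_two _).le (by positivity)
  have hFm : 0 ≤ F m := by
    apply mul_nonneg (by positivity)
    rw [← Real.arctan_zero]
    exact Real.arctan_strictMono.monotone (by positivity)
  have h8 : (1 / (4 * c)) * (Real.pi / 2) = Real.pi / (8 * c) := by ring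
  have hfinal : Real.pi / (8 * c) ≤ Real.pi / (4 * m) := by
    apply div_le_div_of_nonneg_left Real.pi_nonneg (by positivity) (by linarith)
  linarith
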